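/- Let ∃X[F] be an ∃CNF formula and q an assignment to variables of F. Suppose the variables of Z are redundant in ∃X[F|q] with scope W, where Z ⊆ X \ Vars(q), and suppose a variable v of X \ (Vars(q) ∪ Z) is locally redundant in ∃X[F|q \ (F|q)^Z]. Then the variables of Z ∪ {v} are redundant in ∃X[F|q] with scope W ∪ {v}. -/

import Mathlib

open scoped Classical

namespace QE

variable {α : Type*}

/-- A literal: a variable together with a polarity. -/
abbrev Lit (α : Type*) := α × Bool

/-- A clause: a finite disjunction of literals. -/
abbrev Clause (α : Type*) := Finset (Lit α)

/-- A CNF formula: a finite conjunction of clauses. -/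
abbrev CNF (α : Type*) := Finset (Clause α)

/-- A (partial) assignment of Boolean values to variables. -/
abbrev Assign (α : Type*) := α → Option Bool

/-- The variables of a clause. -/
def clauseVars (C : Clause α) : Set α := {v | ∃ b, (v, b) ∈ C}

/-- The variables of a CNF formula. -/
def cnfVars (F : CNF α) : Set α := ⋃ C ∈ F, clauseVars C

/-- The variables assigned by a partial assignment. -/
def avars (q : Assign α) : Set α := {v | q v ≠ none}

/-- The (partial) assignment `r` extends the (partial) assignment `q`, i.e. `q ⊆ r`. -/
def AExtends (q r : Assign α) : Prop := ∀ v b, q v = some b → r v = some b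

/-- The complete assignment (point) `p` extends the partial assignment `q`, i.e. `q ⊆ p`. -/
def PExtends (q : Assign α) (p : α → Bool) : Prop := ∀ v b, q v = some b → p v = b

/-- A complete assignment satisfies a clause. -/
def pointSatClause (p : α → Bool) (C : Clause α) : Prop := ∃ l ∈ C, p l.1 = l.2

/-- A complete assignment satisfies a CNF formula. -/
def pointSatCNF (p : α → Bool) (F : CNF α) : Prop := ∀ C ∈ F, pointSatClause p C

/-- A partial assignment satisfies a clause. -/
def asatClause (q : Assign α) (C : Clause α) : Prop := ∃ l ∈ C, q l.1 = some l.2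

/-- A partial assignment falsifies a literal. -/
def afalsLit (q : Assign α) (l : Lit α) : Prop := q l.1 = some (!l.2)

/-- The cofactor of a clause: remove the literals falsified by `q`. -/
noncomputable def cofClause (q : Assign α) (C : Clause α) : Clause α :=
  C.filter (fun l => ¬ afalsLit q l)

/-- The cofactor `F|q`: remove clauses satisfied by `q` and delete from the
remaining clauses all literals falsified by `q`. -/
noncomputable def cofactor (q : Assign α) (F : CNF α) : CNF α :=
  (F.filter (fun C => ¬ asatClause q C)).image (cofClause q)

/-- The CNF formula `F` implies the clause `C`. -/
def Implies (F : CNF α) (C : Clause α) : Prop :=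
  ∀ p : α → Bool, pointSatCNF p F → pointSatClause p C

/-- `C` is a `Z`-clause: `V(C) ∩ Z ≠ ∅`. -/
def IsZClause (Z : Set α) (C : Clause α) : Prop := (clauseVars C ∩ Z).Nonempty

/-- `F^Z`: the set of `Z`-clauses of `F`. -/
noncomputable def zClauses (F : CNF α) (Z : Set α) : CNF α :=
  F.filter (fun C => IsZClause Z C)

/-- `p` is a `Z`-boundary point of `F`: `Z ≠ ∅`, `p` falsifies `F`, every clause of `F`
falsified by `p` is a `Z`-clause, and the latter condition fails for every proper subset of `Z`. -/
def BoundaryPt (F : CNF α) (Z : Set α) (p : α → Bool) : Prop :=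
  Z.Nonempty ∧ ¬ pointSatCNF p F ∧
  (∀ C ∈ F, ¬ pointSatClause p C → IsZClause Z C) ∧
  (∀ Z' ⊂ Z, ¬ (∀ C ∈ F, ¬ pointSatClause p C → IsZClause Z' C))

/-- A point `p` is `W`-removable in `F`: there is a clause `C` such that `F` implies `C`,
`p` falsifies `C`, and `V(C) ∩ W = ∅`. -/
def Removable (F : CNF α) (W : Set α) (p : α → Bool) : Prop :=
  ∃ C : Clause α, Implies F C ∧ ¬ pointSatClause p C ∧ clauseVars C ∩ W = ∅

/-- The variables of `Z` are redundant in `∃X[F]` with scope `W`: for every nonempty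
subset `Vs ⊆ Z` there is no `W`-removable `Vs`-boundary point of `F`. -/
def RedundantWithScope (F : CNF α) (Z W : Set α) : Prop :=
  ∀ Vs : Set α, Vs ⊆ Z → Vs.Nonempty →
    ∀ p : α → Bool, BoundaryPt F Vs p → ¬ Removable F W p

/-- The D-sequent `(∃X[F], q, W) → Z`: the variables of `Z` are redundant
in `∃X[F|q]` with scope `W`. -/
def DSeq (F : CNF α) (X : Set α) (q : Assign α) (W Z : Set α) : Prop :=
  RedundantWithScope (cofactor q F) Z W

/-- `∃X[F] ≡ ∃X[H]`. -/
def ExEquiv (X : Set α) (F H : CNF α) : Prop :=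
  ∀ p : α → Bool,
    (∃ p' : α → Bool, (∀ v ∉ X, p' v = p v) ∧ pointSatCNF p' F) ↔
    (∃ p' : α → Bool, (∀ v ∉ X, p' v = p v) ∧ pointSatCNF p' H)

/-- The variables of `Z` are redundant in `∃X[F]`: `∃X[F] ≡ ∃X[F \ F^Z]`. -/
noncomputable def Redundant (F : CNF α) (X Z : Set α) : Prop :=
  ExEquiv X F (F \ zClauses F Z)

/-- Clauses `C` and `C'` contain opposite literals of the variable `w`. -/
def oppLitOn (C C' : Clause α) (w : α) : Prop := ∃ b, (w, b) ∈ C ∧ (w, !b) ∈ C'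

/-- Clauses `C` and `C'` are resolvable on `v`: they contain opposite literals of
exactly one variable, namely `v`. -/
def ResolvableOn (C C' : Clause α) (v : α) : Prop := ∀ w, oppLitOn C C' w ↔ w = v

/-- A variable `v` is blocked in `F`: no two clauses of `F` are resolvable on `v`. -/
def BlockedVar (F : CNF α) (v : α) : Prop :=
  ∀ C ∈ F, ∀ C' ∈ F, ¬ ResolvableOn C C' v

/-- Assignments `q` and `q'` assign opposite values to the variable `w`. -/
def aOppOn (q q' : Assign α) (w : α) : Prop := ∃ b, q w = some b ∧ q' w = some (!b)

/-- Assignments `q` and `q'` are resolvable on `v`: exactly one variable assigned by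
both of them, namely `v`, is assigned opposite values. -/
def AResolvableOn (q q' : Assign α) (v : α) : Prop := ∀ w, aOppOn q q' w ↔ w = v

/-- The resolvent of assignments `q` and `q'` on `v`: all single-variable assignments
of `q` and `q'` except those to `v`. -/
noncomputable def aResolvent (q q' : Assign α) (v : α) : Assign α :=
  fun w => if w = v then none else ((q w).orElse (fun _ => q' w))




/-- If `p` falsifies `G` and every clause of `G` falsified by `p` is a `Z`-clause, then
`p` is a `Vs`-boundary point of `G` for some `Vs ⊆ Z`. -/
lemma exists_min_boundary (G : CNF α) (Z : Set α) (p : α → Bool)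
    (hfals : ¬ pointSatCNF p G)
    (hall : ∀ C ∈ G, ¬ pointSatClause p C → IsZClause Z C) :
    ∃ Vs ⊆ Z, BoundaryPt G Vs p := by
  classical
  set T : CNF α := G.filter (fun C => ¬ pointSatClause p C) with hT
  have hTmem : ∀ C, C ∈ T ↔ C ∈ G ∧ ¬ pointSatClause p C := by
    intro C; simp [hT]
  set U : Finset α := T.biUnion (fun C => (C.image Prod.fst).filter (· ∈ Z)) with hU
  set P : Finset α → Prop := fun V => ∀ C ∈ T, (clauseVars C ∩ (↑V : Set α)).Nonempty
    with hP
  have hPU : P U := by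
    intro C hC
    obtain ⟨x, hxC, hxZ⟩ := hall C ((hTmem C).1 hC).1 ((hTmem C).1 hC).2
    refine ⟨x, hxC, ?_⟩
    obtain ⟨b, hb⟩ := hxC
    exact Finset.mem_coe.mpr (Finset.mem_biUnion.mpr ⟨C, hC,
      Finset.mem_filter.mpr ⟨Finset.mem_image.mpr ⟨(x, b), hb, rfl⟩, hxZ⟩⟩)
  have hUmem : U ∈ U.powerset.filter (fun V => P V) := by
    simp only [Finset.mem_filter, Finset.mem_powerset]
    exact ⟨Finset.Subset.refl U, hPU⟩
  have hne : (U.powerset.filter (fun V => P V)).Nonempty := ⟨U, hUmem⟩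
  obtain ⟨V, hVmem, hVmin⟩ := Finset.exists_min_image _ Finset.card hne
  simp only [Finset.mem_filter, Finset.mem_powerset] at hVmem
  obtain ⟨hVU, hPV⟩ := hVmem
  have hTne : T.Nonempty := by
    simp only [pointSatCNF, not_forall] at hfals
    obtain ⟨C, hC, hnC⟩ := hfals
    exact ⟨C, (hTmem C).2 ⟨hC, hnC⟩⟩
  refine ⟨(↑V : Set α), ?_, ?_, hfals, ?_, ?_⟩
  · intro x hx
    have hxU : x ∈ U := hVU hx
    simp only [hU, Finset.mem_biUnion, Finset.mem_filter] at hxU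
    obtain ⟨C, _, _, hxZ⟩ := hxU
    exact hxZ
  · obtain ⟨C, hC⟩ := hTne
    obtain ⟨x, _, hx⟩ := hPV C hC
    exact ⟨x, hx⟩
  · intro C hC hnC
    exact hPV C ((hTmem C).2 ⟨hC, hnC⟩)
  · intro Z' hZ' hclaim
    have hfin : Z'.Finite := V.finite_toSet.subset hZ'.subset
    set V' : Finset α := hfin.toFinset with hV'
    have hV'c : (↑V' : Set α) = Z' := hfin.coe_toFinset
    have hss : V' ⊂ V := by
      rw [← Finset.coe_ssubset, hV'c]; exact hZ'
    have hPV' : P V' := by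
      intro C hC
      rw [hV'c]
      exact hclaim C ((hTmem C).1 hC).1 ((hTmem C).1 hC).2
    have hV'mem : V' ∈ U.powerset.filter (fun V => P V) := by
      simp only [Finset.mem_filter, Finset.mem_powerset]
      exact ⟨hss.subset.trans hVU, hPV'⟩
    have : V.card ≤ V'.card := hVmin V' hV'mem
    exact absurd (Finset.card_lt_card hss) (not_lt.mpr this)

/-- Proposition 4: If the variables of `Z ⊆ X \ Vars(q)` are redundant in
`∃X[F|q]` with scope `W`, and a variable `v ∈ X \ (Vars(q) ∪ Z)` is locally redundant in
`∃X[F|q \ (F|q)^Z]`, then the variables of `Z ∪ {v}` are redundant in `∃X[F|q]` with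
scope `W ∪ {v}`. -/
theorem redundant_insert_locally_redundant {α : Type*} (F : CNF α) (X Z W : Set α)
    (q : Assign α) (v : α)
    (hX : X ⊆ cnfVars F) (hq : avars q ⊆ cnfVars F)
    (hZq : Z ⊆ X \ avars q) (hZW : Z ⊆ W) (hWq : W ⊆ X \ avars q)
    (hred : RedundantWithScope (cofactor q F) Z W)
    (hv : v ∈ X \ (avars q ∪ Z))
    (hloc : RedundantWithScope (cofactor q F \ zClauses (cofactor q F) Z) {v} {v}) :
    RedundantWithScope (cofactor q F) (Z ∪ {v}) (W ∪ {v}) := by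
  classical
  set G : CNF α := cofactor q F with hG
  intro Vs hVsub hVne p hbp hrem
  obtain ⟨C, hImp, hCf, hCint⟩ := hrem
  have hCW : clauseVars C ∩ W = ∅ := by
    rw [Set.eq_empty_iff_forall_notMem] at hCint ⊢
    exact fun x hx => hCint x ⟨hx.1, Or.inl hx.2⟩
  have hCv : clauseVars C ∩ ({v} : Set α) = ∅ := by
    rw [Set.eq_empty_iff_forall_notMem] at hCint ⊢
    exact fun x hx => hCint x ⟨hx.1, Or.inr hx.2⟩
  by_cases hcase : ∀ C' ∈ G, ¬ pointSatClause p C' → IsZClause Z C'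
  · obtain ⟨Vs', hsub, hbp'⟩ := exists_min_boundary G Z p hbp.2.1 hcase
    exact hred Vs' hsub hbp'.1 p hbp' ⟨C, hImp, hCf, hCW⟩
  · push_neg at hcase
    obtain ⟨C₀, hC₀G, hC₀f, hC₀Z⟩ := hcase
    have hC₀mem : C₀ ∈ G \ zClauses G Z := by
      simp only [Finset.mem_sdiff, zClauses, Finset.mem_filter]
      exact ⟨hC₀G, fun h => hC₀Z h.2⟩
    have hbv : BoundaryPt (G \ zClauses G Z) {v} p := by
      refine ⟨⟨v, rfl⟩, ?_, ?_, ?_⟩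
      · exact fun h => hC₀f (h C₀ hC₀mem)
      · intro C' hC' hnf
        simp only [Finset.mem_sdiff, zClauses, Finset.mem_filter] at hC'
        obtain ⟨hC'G, hC'nz⟩ := hC'
        obtain ⟨x, hxC, hxVs⟩ := hbp.2.2.1 C' hC'G hnf
        rcases hVsub hxVs with hxZ | hxv
        · exact absurd ⟨hC'G, ⟨x, hxC, hxZ⟩⟩ hC'nz
        · exact ⟨x, hxC, hxv⟩
      · intro Z' hZ' hclaim
        rw [Set.ssubset_singleton_iff] at hZ'
        obtain ⟨x, _, hx⟩ := hclaim C₀ hC₀mem hC₀f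
        rw [hZ'] at hx
        exact hx
    have hImp' : Implies (G \ zClauses G Z) C := by
      intro p' hsat'
      by_contra hns
      have hfals' : ¬ pointSatCNF p' G := fun h => hns (hImp p' h)
      have hall : ∀ C' ∈ G, ¬ pointSatClause p' C' → IsZClause Z C' := by
        intro C' hC' hnf
        by_contra hnz
        refine hnf (hsat' C' ?_)
        simp only [Finset.mem_sdiff, zClauses, Finset.mem_filter]
        exact ⟨hC', fun h => hnz h.2⟩
      obtain ⟨Vs', hs, hbp'⟩ := exists_min_boundary G Z p' hfals' hall
      exact hred Vs' hs hbp'.1 p' hbp' ⟨C, hImp, hns, hCW⟩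
    exact hloc {v} subset_rfl ⟨v, rfl⟩ p hbv ⟨C, hImp', hCf, hCv⟩

end QE
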